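/- arXiv:2312.00070 — 4 statements merged into one kernel-verified Lean document; each statement's English description precedes it below -/
import Mathlib

section
/- Let m be a natural number, S ⊆ Fin m, and v ∈ ℝᵐ. Then the supremum of ⟨y, v⟩ over all y ∈ ℝᵐ with ‖y‖₂ ≤ 1 and yᵢ ≥ 0 for every i ∈ S equals √( Σ_{i ∉ S} vᵢ² + Σ_{i ∈ S} (max(vᵢ, 0))² ), and this supremum is attained. -/
/-- The Euclidean norm of a vector `v : ι → ℝ`. -/
noncomputable def euclideanNorm {ι : Type*} [Fintype ι] (v : ι → ℝ) : ℝ :=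
  Real.sqrt (∑ i, v i ^ 2)

/-- The supremum of `⟨y, v⟩` over `y` in the unit ball with `yᵢ ≥ 0` for `i ∈ S` equals
`√(Σ_{i∉S} vᵢ² + Σ_{i∈S} max(vᵢ,0)²)`, and it is attained. -/
theorem stmt3 (m : ℕ) (S : Finset (Fin m)) (v : Fin m → ℝ) :
    IsGreatest
      {r : ℝ | ∃ y : Fin m → ℝ,
        euclideanNorm y ≤ 1 ∧ (∀ i ∈ S, 0 ≤ y i) ∧ r = ∑ i, y i * v i}
      (Real.sqrt (∑ i ∈ Sᶜ, v i ^ 2 + ∑ i ∈ S, max (v i) 0 ^ 2)) := by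
  set w : Fin m → ℝ := fun i => if i ∈ S then max (v i) 0 else v i with hw
  set W : ℝ := ∑ i, w i ^ 2 with hW
  have hWnn : 0 ≤ W := Finset.sum_nonneg fun i _ => sq_nonneg _
  have hWeq : ∑ i ∈ Sᶜ, v i ^ 2 + ∑ i ∈ S, max (v i) 0 ^ 2 = W := by
    rw [hW, ← Finset.sum_add_sum_compl S (fun i => w i ^ 2), add_comm]
    congr 1
    · exact Finset.sum_congr rfl fun i hi => by simp [hw, hi]
    · exact Finset.sum_congr rfl fun i hi => by simp [hw, Finset.mem_compl.mp hi]
  have hwv : ∀ i, w i * v i = w i ^ 2 := by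
    intro i
    by_cases hi : i ∈ S
    · simp only [hw, hi, if_pos]
      rcases le_total (v i) 0 with h | h
      · simp [max_eq_right h]
      · simp [max_eq_left h, sq]
    · simp [hw, hi, sq]
  set N : ℝ := Real.sqrt W with hN
  have hN2 : N ^ 2 = W := Real.sq_sqrt hWnn
  rw [hWeq]
  constructor
  · -- membership
    by_cases h0 : N = 0
    · refine ⟨0, ?_, fun i _ => le_refl _, ?_⟩
      · simp [euclideanNorm]
      · simp [← hN, h0]
    · have hNpos : 0 < N := lt_of_le_of_ne (Real.sqrt_nonneg _) (Ne.symm h0)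
      refine ⟨fun i => w i / N, ?_, ?_, ?_⟩
      · have h : ∑ i, (w i / N) ^ 2 = W / N ^ 2 := by
          simp_rw [div_pow]
          rw [← Finset.sum_div, ← hW]
        have hWpos : (0:ℝ) < W := by nlinarith
        rw [euclideanNorm, h, hN2, div_self (ne_of_gt hWpos), Real.sqrt_one]
      · intro i hi
        exact div_nonneg (by simp [hw, hi, le_max_iff]) hNpos.le
      · have h : ∑ i, w i / N * v i = W / N := by
          rw [hW, Finset.sum_div]
          exact Finset.sum_congr rfl fun i _ => by rw [div_mul_eq_mul_div, hwv i]
        rw [h, eq_div_iff h0, hN]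
        exact Real.mul_self_sqrt hWnn
  · -- upper bound
    rintro r ⟨y, hy1, hyS, rfl⟩
    have hyw : ∑ i, y i * v i ≤ ∑ i, y i * w i := by
      apply Finset.sum_le_sum
      intro i _
      by_cases hi : i ∈ S
      · simp only [hw, hi, if_pos]
        exact mul_le_mul_of_nonneg_left (le_max_left _ _) (hyS i hi)
      · simp [hw, hi]
    have hcs : (∑ i, y i * w i) ^ 2 ≤ (∑ i, y i ^ 2) * W :=
      Finset.sum_mul_sq_le_sq_mul_sq _ _ _
    have hy2 : ∑ i, y i ^ 2 ≤ 1 := by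
      have := Real.sqrt_le_sqrt (le_of_eq (rfl : ∑ i, y i ^ 2 = ∑ i, y i ^ 2))
      have h1 : Real.sqrt (∑ i, y i ^ 2) ≤ 1 := hy1
      nlinarith [Real.sq_sqrt (Finset.sum_nonneg fun i (_ : i ∈ Finset.univ) => sq_nonneg (y i)),
        Real.sqrt_nonneg (∑ i, y i ^ 2)]
    have h2 : (∑ i, y i * w i) ^ 2 ≤ W := le_trans hcs (by nlinarith)
    have h3 : ∑ i, y i * w i ≤ N := by
      rcases le_total (∑ i, y i * w i) 0 with h | h
      · exact le_trans h (Real.sqrt_nonneg _)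
      · calc ∑ i, y i * w i = Real.sqrt ((∑ i, y i * w i) ^ 2) := (Real.sqrt_sq h).symm
          _ ≤ N := Real.sqrt_le_sqrt h2
    exact le_trans hyw h3
end

section
/- Let I and J be finite nonempty sets, D : I × J → ℝ, and β > 0. Then −min_{i∈I} max_{j∈J} D(i,j) − (log |J|)/β ≤ (1/β) · log( Σ_{i∈I} ( Σ_{j∈J} exp(β·D(i,j)) )^{−1} ) ≤ −min_{i∈I} max_{j∈J} D(i,j) + (log |I|)/β. -/
/-- Two-sided bound for the two-level free-energy functional with outer exponent
`s = −1`: up to `(log |J|)/β` and `(log |I|)/β` corrections, `(1/β)·log Z` with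
`Z = Σ_{i∈I}(Σ_{j∈J} e^{β D(i,j)})⁻¹` equals `−min_{i∈I} max_{j∈J} D(i,j)`. -/
theorem stmt9 (I J : Type) [Fintype I] [Fintype J] [Nonempty I] [Nonempty J]
    (D : I → J → ℝ) (β : ℝ) (hβ : 0 < β) :
    (-(⨅ i, ⨆ j, D i j) - Real.log (Fintype.card J) / β
        ≤ (1 / β) * Real.log (∑ i, (∑ j, Real.exp (β * D i j))⁻¹))
      ∧ ((1 / β) * Real.log (∑ i, (∑ j, Real.exp (β * D i j))⁻¹)
        ≤ -(⨅ i, ⨆ j, D i j) + Real.log (Fintype.card I) / β) := by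
  classical
  set M : I → ℝ := fun i => ⨆ j, D i j with hM
  set m : ℝ := ⨅ i, M i with hm
  set Z : ℝ := ∑ i, (∑ j, Real.exp (β * D i j))⁻¹ with hZ
  set S : I → ℝ := fun i => ∑ j, Real.exp (β * D i j) with hS
  have hZdef : Z = ∑ i, (S i)⁻¹ := rfl
  have hβ' : β ≠ 0 := ne_of_gt hβ
  have hMle : ∀ i j, D i j ≤ M i := fun i j =>
    le_ciSup (Set.Finite.bddAbove (Set.finite_range _)) j
  have hmle : ∀ i, m ≤ M i := fun i =>
    ciInf_le (Set.Finite.bddBelow (Set.finite_range _)) i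
  obtain ⟨i0, hi0⟩ := Finite.exists_min M
  have hmi0 : m = M i0 := le_antisymm (hmle i0) (le_ciInf hi0)
  have hMatt : ∀ i, ∃ j, M i = D i j := by
    intro i
    obtain ⟨j0, hj0⟩ := Finite.exists_max (D i)
    exact ⟨j0, le_antisymm (ciSup_le hj0) (hMle i j0)⟩
  have hSpos : ∀ i, 0 < S i := fun i =>
    Finset.sum_pos (fun j _ => Real.exp_pos _) Finset.univ_nonempty
  have hSlb : ∀ i, Real.exp (β * M i) ≤ S i := by
    intro i
    obtain ⟨j0, hj0⟩ := hMatt i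
    rw [hj0]
    exact Finset.single_le_sum (f := fun j => Real.exp (β * D i j)) (fun j _ => (Real.exp_pos _).le) (Finset.mem_univ j0)
  have hSub : ∀ i, S i ≤ (Fintype.card J : ℝ) * Real.exp (β * M i) := by
    intro i
    calc S i ≤ ∑ _j : J, Real.exp (β * M i) :=
          Finset.sum_le_sum (fun j _ =>
            Real.exp_le_exp.mpr (mul_le_mul_of_nonneg_left (hMle i j) hβ.le))
      _ = (Fintype.card J : ℝ) * Real.exp (β * M i) := by
          simp [Finset.sum_const, Finset.card_univ, nsmul_eq_mul]
  have hZpos : 0 < Z := by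
    rw [hZdef]
    exact Finset.sum_pos (fun i _ => inv_pos.mpr (hSpos i)) Finset.univ_nonempty
  have hI : (0:ℝ) < Fintype.card I := by
    exact_mod_cast Fintype.card_pos
  have hJ : (0:ℝ) < Fintype.card J := by
    exact_mod_cast Fintype.card_pos
  have hZub : Z ≤ (Fintype.card I : ℝ) * Real.exp (-(β * m)) := by
    rw [hZdef]
    calc ∑ i, (S i)⁻¹ ≤ ∑ _i : I, Real.exp (-(β * m)) := by
          refine Finset.sum_le_sum (fun i _ => ?_)
          have h1 : (S i)⁻¹ ≤ (Real.exp (β * M i))⁻¹ :=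
            inv_anti₀ (Real.exp_pos _) (hSlb i)
          rw [← Real.exp_neg] at h1
          exact h1.trans (Real.exp_le_exp.mpr
            (neg_le_neg (mul_le_mul_of_nonneg_left (hmle i) hβ.le)))
      _ = (Fintype.card I : ℝ) * Real.exp (-(β * m)) := by
          simp [Finset.sum_const, Finset.card_univ, nsmul_eq_mul]
  have hZlb : ((Fintype.card J : ℝ))⁻¹ * Real.exp (-(β * m)) ≤ Z := by
    have h2 : ((Fintype.card J : ℝ) * Real.exp (β * M i0))⁻¹ ≤ (S i0)⁻¹ :=
      inv_anti₀ (hSpos i0) (hSub i0)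
    have h3 : (S i0)⁻¹ ≤ Z := by
      rw [hZdef]
      exact Finset.single_le_sum (fun i _ => (inv_pos.mpr (hSpos i)).le)
        (Finset.mem_univ i0)
    have h4 : ((Fintype.card J : ℝ) * Real.exp (β * M i0))⁻¹
        = ((Fintype.card J : ℝ))⁻¹ * Real.exp (-(β * m)) := by
      rw [mul_inv, ← Real.exp_neg, hmi0]
    linarith
  have hlogub : Real.log Z ≤ Real.log (Fintype.card I) + -(β * m) := by
    have := Real.log_le_log hZpos hZub
    rwa [Real.log_mul (ne_of_gt hI) (Real.exp_ne_zero _), Real.log_exp] at this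
  have hloglb : -Real.log (Fintype.card J) + -(β * m) ≤ Real.log Z := by
    have h5 : (0:ℝ) < ((Fintype.card J : ℝ))⁻¹ * Real.exp (-(β * m)) := by positivity
    have := Real.log_le_log h5 hZlb
    rwa [Real.log_mul (by positivity) (Real.exp_ne_zero _), Real.log_exp,
      Real.log_inv] at this
  constructor
  · have h6 := mul_le_mul_of_nonneg_left hloglb (by positivity : (0:ℝ) ≤ 1/β)
    have h7 : (1/β) * (-Real.log (Fintype.card J) + -(β * m))
        = -m - Real.log (Fintype.card J) / β := by field_simp; ring
    linarith
  · have h6 := mul_le_mul_of_nonneg_left hlogub (by positivity : (0:ℝ) ≤ 1/β)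
    have h7 : (1/β) * (Real.log (Fintype.card I) + -(β * m))
        = -m + Real.log (Fintype.card I) / β := by field_simp; ring
    linarith
end

section
/- Let I and J be finite nonempty sets and D : I × J → ℝ. Then, as β → +∞, the quantity (1/β) · log( Σ_{i∈I} ( Σ_{j∈J} exp(β·D(i,j)) )^{−1} ) converges to −min_{i∈I} max_{j∈J} D(i,j). -/
/-- As `β → ∞`, the two-level free-energy functional `(1/β)·log Z` with
`Z = Σ_{i∈I}(Σ_{j∈J} e^{β D(i,j)})⁻¹` converges to `−min_{i∈I} max_{j∈J} D(i,j)`. -/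
theorem stmt10 (I J : Type) [Fintype I] [Fintype J] [Nonempty I] [Nonempty J]
    (D : I → J → ℝ) :
    Filter.Tendsto
      (fun β : ℝ => (1 / β) * Real.log (∑ i, (∑ j, Real.exp (β * D i j))⁻¹))
      Filter.atTop (nhds (-(⨅ i, ⨆ j, D i j))) := by
  set M : I → ℝ := fun i => ⨆ j, D i j with hMdef
  set m : ℝ := ⨅ i, M i with hmdef
  obtain ⟨i0, hi0⟩ := Finite.exists_min M
  have hDle : ∀ i j, D i j ≤ M i := fun i j =>
    le_ciSup (Set.finite_range (D i)).bddAbove j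
  have hmle : ∀ i, m ≤ M i := fun i => ciInf_le (Set.finite_range M).bddBelow i
  have hmi0 : M i0 = m := le_antisymm (le_ciInf hi0) (hmle i0)
  have hMmax : ∀ i, ∃ j, D i j = M i := by
    intro i
    obtain ⟨j0, hj0⟩ := Finite.exists_max (D i)
    exact ⟨j0, le_antisymm (hDle i j0) (ciSup_le hj0)⟩
  set cI : ℝ := (Fintype.card I : ℝ) with hcIdef
  set cJ : ℝ := (Fintype.card J : ℝ) with hcJdef
  have hcI : 0 < cI := by rw [hcIdef]; exact_mod_cast Fintype.card_pos (α := I)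
  have hcJ : 0 < cJ := by rw [hcJdef]; exact_mod_cast Fintype.card_pos (α := J)
  set Z : ℝ → ℝ := fun β => ∑ i, (∑ j, Real.exp (β * D i j))⁻¹ with hZdef
  have hSpos : ∀ β i, 0 < ∑ j, Real.exp (β * D i j) := fun β i =>
    Finset.sum_pos (fun j _ => Real.exp_pos _) Finset.univ_nonempty
  have hZpos : ∀ β, 0 < Z β := fun β =>
    Finset.sum_pos (fun i _ => inv_pos.mpr (hSpos β i)) Finset.univ_nonempty
  -- upper bound: Z β ≤ cI * exp (-(β*m)) for β > 0
  have hup : ∀ β : ℝ, 0 < β → Z β ≤ cI * Real.exp (-(β * m)) := by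
    intro β hβ
    have : Z β ≤ ∑ _i : I, Real.exp (-(β * m)) := by
      apply Finset.sum_le_sum
      intro i _
      rw [Real.exp_neg]
      apply inv_anti₀ (Real.exp_pos _)
      obtain ⟨j0, hj0⟩ := hMmax i
      calc Real.exp (β * m) ≤ Real.exp (β * D i j0) := by
            apply Real.exp_le_exp.mpr
            have := hmle i
            nlinarith [hmle i]
        _ ≤ ∑ j, Real.exp (β * D i j) :=
            Finset.single_le_sum (f := fun j => Real.exp (β * D i j)) (fun j _ => (Real.exp_pos _).le) (Finset.mem_univ j0)
    simpa [Finset.sum_const, Finset.card_univ, nsmul_eq_mul] using this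
  -- lower bound: (cJ * exp (β*m))⁻¹ ≤ Z β for β > 0
  have hlo : ∀ β : ℝ, 0 < β → (cJ * Real.exp (β * m))⁻¹ ≤ Z β := by
    intro β hβ
    have h1 : ∑ j, Real.exp (β * D i0 j) ≤ cJ * Real.exp (β * m) := by
      calc ∑ j, Real.exp (β * D i0 j) ≤ ∑ _j : J, Real.exp (β * m) := by
            apply Finset.sum_le_sum
            intro j _
            apply Real.exp_le_exp.mpr
            have h2 : D i0 j ≤ m := hmi0 ▸ hDle i0 j
            nlinarith
        _ = cJ * Real.exp (β * m) := by
            simp [Finset.sum_const, Finset.card_univ, nsmul_eq_mul, hcJdef]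
    calc (cJ * Real.exp (β * m))⁻¹ ≤ (∑ j, Real.exp (β * D i0 j))⁻¹ :=
          inv_anti₀ (hSpos β i0) h1
      _ ≤ Z β := Finset.single_le_sum
          (fun i _ => (inv_pos.mpr (hSpos β i)).le) (Finset.mem_univ i0)
  -- squeeze
  have hlim1 : Filter.Tendsto (fun β : ℝ => -m - (1 / β) * Real.log cJ)
      Filter.atTop (nhds (-m)) := by
    have := (tendsto_inv_atTop_zero : Filter.Tendsto (fun x:ℝ => x⁻¹) Filter.atTop (nhds 0)).mul_const (Real.log cJ)
    have h := (tendsto_const_nhds (x := -m) (f := Filter.atTop (α := ℝ))).sub this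
    simpa [one_div] using h
  have hlim2 : Filter.Tendsto (fun β : ℝ => -m + (1 / β) * Real.log cI)
      Filter.atTop (nhds (-m)) := by
    have := (tendsto_inv_atTop_zero : Filter.Tendsto (fun x:ℝ => x⁻¹) Filter.atTop (nhds 0)).mul_const (Real.log cI)
    have h := (tendsto_const_nhds (x := -m) (f := Filter.atTop (α := ℝ))).add this
    simpa [one_div] using h
  apply Filter.Tendsto.congr' (f₁ := fun β => (1/β) * Real.log (Z β)) (by rfl)
  refine tendsto_of_tendsto_of_tendsto_of_le_of_le' hlim1 hlim2 ?_ ?_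
  · filter_upwards [Filter.eventually_gt_atTop 0] with β hβ
    have h1 : Real.log ((cJ * Real.exp (β * m))⁻¹) ≤ Real.log (Z β) :=
      Real.log_le_log (by positivity) (hlo β hβ)
    have h2 : Real.log ((cJ * Real.exp (β * m))⁻¹) = -(Real.log cJ + β * m) := by
      rw [Real.log_inv, Real.log_mul (ne_of_gt hcJ) (Real.exp_ne_zero _), Real.log_exp]
    have h3 := mul_le_mul_of_nonneg_left h1 (le_of_lt (one_div_pos.mpr hβ))
    rw [h2] at h3
    have h4 : (1/β) * -(Real.log cJ + β * m) = -m - (1/β) * Real.log cJ := by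
      field_simp
      ring
    linarith [h3, h4.symm.le, h4.le]
  · filter_upwards [Filter.eventually_gt_atTop 0] with β hβ
    have h1 : Real.log (Z β) ≤ Real.log (cI * Real.exp (-(β * m))) :=
      Real.log_le_log (hZpos β) (hup β hβ)
    have h2 : Real.log (cI * Real.exp (-(β * m))) = Real.log cI - β * m := by
      rw [Real.log_mul (ne_of_gt hcI) (Real.exp_ne_zero _), Real.log_exp]; ring
    have h3 := mul_le_mul_of_nonneg_left h1 (le_of_lt (one_div_pos.mpr hβ))
    rw [h2] at h3
    have h4 : (1/β) * (Real.log cI - β * m) = -m + (1/β) * Real.log cI := by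
      field_simp
      ring
    linarith [h3, h4.le]
end

section
/- Let μ be the law of an m×n random matrix G whose entries are independent standard Gaussians (the product over Fin m × Fin n of the standard real Gaussian measure). Let F ⊆ ℝⁿ and H ⊆ ℝᵐ be finite nonempty sets and f : ℝⁿ → ℝ. Then for each β > 0 the function G ↦ (1/β)·log( Σ_{x∈F} ( Σ_{y∈H} exp(β·(f(x) + ⟨y, Gx⟩)) )^{−1} ) is μ-integrable, the function G ↦ min_{x∈F} max_{y∈H} (f(x) + ⟨y, Gx⟩) is μ-integrable, and as β → +∞ the expectation under μ of the former converges to minus the expectation under μ of the latter. -/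
open MeasureTheory ProbabilityTheory Real
open scoped NNReal

lemma measurePreserving_eval_pi' {ι : Type*} [Fintype ι] [DecidableEq ι] {α : ι → Type*}
    [∀ i, MeasurableSpace (α i)] (μ : ∀ i, Measure (α i)) [∀ i, IsProbabilityMeasure (μ i)]
    (i : ι) : MeasurePreserving (Function.eval i) (Measure.pi μ) (μ i) := by
  refine ⟨measurable_pi_apply i, ?_⟩
  ext s hs
  rw [Measure.map_apply (measurable_pi_apply i) hs, Set.eval_preimage, Measure.pi_pi]
  rw [Fintype.prod_eq_single i]
  · simp
  · intro j hj; simp [Function.update_of_ne hj]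

lemma integrable_id_gaussianReal' : Integrable (id : ℝ → ℝ) (gaussianReal 0 1) := by
  rw [gaussianReal_of_var_ne_zero _ one_ne_zero, gaussianPDF_def]
  rw [integrable_withDensity_iff (measurable_gaussianPDFReal 0 1).ennreal_ofReal
      (Filter.Eventually.of_forall fun x => ENNReal.ofReal_lt_top)]
  have h := (integrable_rpow_mul_exp_neg_mul_sq (show (0:ℝ) < 1/2 by norm_num)
      (show (-1:ℝ) < 1 by norm_num)).const_mul ((Real.sqrt (2 * π * ((1:ℝ≥0):ℝ)))⁻¹)
  refine h.congr (Filter.Eventually.of_forall fun x => ?_)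
  simp only [id_eq, ENNReal.toReal_ofReal (gaussianPDFReal_nonneg 0 1 x)]
  rw [gaussianPDFReal, Real.rpow_one]
  push_cast
  rw [show 2 * π * (1:ℝ) = 2 * π by ring]
  ring_nf

lemma measurable_finset_inf'' {δ : Type*} [MeasurableSpace δ] {ι : Type*} {s : Finset ι}
    (hs : s.Nonempty) {f : ι → δ → ℝ} (hf : ∀ i, Measurable (f i)) :
    Measurable fun a => s.inf' hs fun i => f i a := by
  induction hs using Finset.Nonempty.cons_induction with
  | singleton a => simpa using hf a
  | cons a s ha hs ih =>
    have he : (fun x => (Finset.cons a s ha).inf' (Finset.cons_nonempty ha) fun i => f i x)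
        = fun x => min (f a x) (s.inf' hs fun i => f i x) := by
      funext x; rw [Finset.inf'_cons]
    rw [he]
    exact (hf a).min ih

lemma measurable_finset_sup'' {δ : Type*} [MeasurableSpace δ] {ι : Type*} {s : Finset ι}
    (hs : s.Nonempty) {f : ι → δ → ℝ} (hf : ∀ i, Measurable (f i)) :
    Measurable fun a => s.sup' hs fun i => f i a := by
  induction hs using Finset.Nonempty.cons_induction with
  | singleton a => simpa using hf a
  | cons a s ha hs ih =>
    have he : (fun x => (Finset.cons a s ha).sup' (Finset.cons_nonempty ha) fun i => f i x)
        = fun x => max (f a x) (s.sup' hs fun i => f i x) := by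
      funext x; rw [Finset.sup'_cons]
    rw [he]
    exact (hf a).max ih

/-- Let `μ` be the law of an `m×n` matrix with i.i.d. standard Gaussian entries. For
finite nonempty `F ⊆ ℝⁿ`, `H ⊆ ℝᵐ` and `f : ℝⁿ → ℝ`, the free-energy functional
`G ↦ (1/β)·log(Σ_{x∈F}(Σ_{y∈H} e^{β(f(x)+⟨y,Gx⟩)})⁻¹)` is integrable for every `β > 0`,
the min-max `G ↦ min_{x∈F} max_{y∈H} (f(x)+⟨y,Gx⟩)` is integrable, and as `β → ∞` the
expectation of the former converges to minus the expectation of the latter. -/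
theorem stmt12 (m n : ℕ) (F : Finset (Fin n → ℝ)) (H : Finset (Fin m → ℝ))
    (hF : F.Nonempty) (hH : H.Nonempty) (f : (Fin n → ℝ) → ℝ) :
    let μ : Measure ((Fin m × Fin n) → ℝ) := Measure.pi fun _ => gaussianReal 0 1
    let φ : ℝ → ((Fin m × Fin n) → ℝ) → ℝ := fun β G =>
      (1 / β) * Real.log
        (∑ x ∈ F, (∑ y ∈ H, Real.exp (β * (f x + ∑ i, y i * ∑ j, G (i, j) * x j)))⁻¹)
    let ψ : ((Fin m × Fin n) → ℝ) → ℝ := fun G =>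
      F.inf' hF fun x => H.sup' hH fun y => f x + ∑ i, y i * ∑ j, G (i, j) * x j
    (∀ β : ℝ, 0 < β → Integrable (φ β) μ)
      ∧ Integrable ψ μ
      ∧ Filter.Tendsto (fun β : ℝ => ∫ G, φ β G ∂μ) Filter.atTop
          (nhds (-∫ G, ψ G ∂μ)) := by
  intro μ φ ψ
  have hprob : IsProbabilityMeasure μ := MeasureTheory.Measure.pi.instIsProbabilityMeasure _
  set g : (Fin n → ℝ) → (Fin m → ℝ) → ((Fin m × Fin n) → ℝ) → ℝ :=
    fun x y G => f x + ∑ i, y i * ∑ j, G (i, j) * x j with hg_def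
  -- integrability of coordinate evaluations
  have heval : ∀ k : Fin m × Fin n, Integrable (fun G : (Fin m × Fin n) → ℝ => G k) μ := by
    intro k
    exact ((measurePreserving_eval_pi' (fun _ : Fin m × Fin n => gaussianReal 0 1)
      k).integrable_comp measurable_id.aestronglyMeasurable).2 integrable_id_gaussianReal'
  -- integrability of each g x y
  have hgint : ∀ x y, Integrable (g x y) μ := by
    intro x y
    have h1 : Integrable (fun G : (Fin m × Fin n) → ℝ =>
        ∑ i : Fin m, ∑ j : Fin n, y i * x j * G (i, j)) μ :=
      integrable_finset_sum _ fun i _ => integrable_finset_sum _ fun j _ =>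
        (heval (i, j)).const_mul _
    refine ((integrable_const (f x)).add h1).congr (Filter.Eventually.of_forall fun G => ?_)
    show f x + (∑ i : Fin m, ∑ j : Fin n, y i * x j * G (i, j)) = g x y G
    simp only [g, Finset.mul_sum]
    congr 1
    exact Finset.sum_congr rfl fun i _ => Finset.sum_congr rfl fun j _ => by ring
  -- measurability of each g x y
  have hgmeas : ∀ x y, Measurable (g x y) := by
    intro x y
    exact measurable_const.add (Finset.measurable_sum _ fun i _ =>
      ((Finset.measurable_sum _ fun j _ =>
        (show Measurable fun G : (Fin m × Fin n) → ℝ => G (i, j) * x j by fun_prop)).const_mul (y i)))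
  have hψmeas : Measurable ψ :=
    measurable_finset_inf'' hF fun x => measurable_finset_sup'' hH fun y => hgmeas x y
  -- integrability of ψ
  have hψint : Integrable ψ μ := by
    have hbnd : Integrable (fun G => ∑ x ∈ F, ∑ y ∈ H, |g x y G|) μ :=
      integrable_finset_sum _ fun x _ => integrable_finset_sum _ fun y _ => (hgint x y).abs
    refine hbnd.mono' hψmeas.aestronglyMeasurable (Filter.Eventually.of_forall fun G => ?_)
    obtain ⟨x0, hx0, hx0eq⟩ := F.exists_mem_eq_inf' hF
      (fun x => H.sup' hH fun y => g x y G)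
    obtain ⟨y0, hy0, hy0eq⟩ := H.exists_mem_eq_sup' hH (fun y => g x0 y G)
    have hψG : ψ G = g x0 y0 G := by
      show (F.inf' hF fun x => H.sup' hH fun y => g x y G) = _
      rw [hx0eq, hy0eq]
    rw [Real.norm_eq_abs, hψG]
    calc |g x0 y0 G| ≤ ∑ y ∈ H, |g x0 y G| :=
          Finset.single_le_sum (f := fun y => |g x0 y G|) (fun y _ => abs_nonneg _) hy0
      _ ≤ ∑ x ∈ F, ∑ y ∈ H, |g x y G| :=
          Finset.single_le_sum (f := fun x => ∑ y ∈ H, |g x y G|)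
            (fun x _ => Finset.sum_nonneg fun y _ => abs_nonneg _) hx0
  -- the constant C
  set C : ℝ := max (Real.log F.card) (Real.log H.card) with hC_def
  have hCF : Real.log F.card ≤ C := le_max_left _ _
  have hCH : Real.log H.card ≤ C := le_max_right _ _
  -- the key bound
  have key : ∀ β : ℝ, 0 < β → ∀ G, |φ β G + ψ G| ≤ C / β := by
    intro β hβ G
    set Mx : (Fin n → ℝ) → ℝ := fun x => H.sup' hH fun y => g x y G with hMx_def
    set S : (Fin n → ℝ) → ℝ := fun x => ∑ y ∈ H, Real.exp (β * g x y G) with hS_def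
    have hSpos : ∀ x, 0 < S x := fun x => Finset.sum_pos (fun y _ => Real.exp_pos _) hH
    have hψG : ψ G = F.inf' hF Mx := rfl
    have hφG : φ β G = (1 / β) * Real.log (∑ x ∈ F, (S x)⁻¹) := rfl
    have hlow : ∀ x ∈ F, Real.exp (β * Mx x) ≤ S x := by
      intro x _
      obtain ⟨y0, hy0, hy0eq⟩ := H.exists_mem_eq_sup' hH (fun y => g x y G)
      have : Mx x = g x y0 G := hy0eq
      rw [this]
      exact Finset.single_le_sum (f := fun y => Real.exp (β * g x y G))
        (fun y _ => (Real.exp_pos _).le) hy0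
    have hup : ∀ x, S x ≤ (H.card : ℝ) * Real.exp (β * Mx x) := by
      intro x
      have := Finset.sum_le_card_nsmul H (fun y => Real.exp (β * g x y G))
        (Real.exp (β * Mx x)) (fun y hy => Real.exp_le_exp.2
          (mul_le_mul_of_nonneg_left (Finset.le_sup' (fun y => g x y G) hy) hβ.le))
      simpa [nsmul_eq_mul] using this
    set T : ℝ := ∑ x ∈ F, (S x)⁻¹ with hT_def
    have hTpos : 0 < T := Finset.sum_pos (fun x _ => inv_pos.2 (hSpos x)) hF
    have hTup : T ≤ (F.card : ℝ) * Real.exp (-(β * ψ G)) := by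
      calc T ≤ ∑ _x ∈ F, Real.exp (-(β * ψ G)) := by
            apply Finset.sum_le_sum
            intro x hx
            have h2 : (S x)⁻¹ ≤ (Real.exp (β * Mx x))⁻¹ :=
              inv_anti₀ (Real.exp_pos _) (hlow x hx)
            rw [← Real.exp_neg] at h2
            refine h2.trans (Real.exp_le_exp.2 ?_)
            have hle : ψ G ≤ Mx x := hψG ▸ Finset.inf'_le Mx hx
            nlinarith
        _ = (F.card : ℝ) * Real.exp (-(β * ψ G)) := by
            rw [Finset.sum_const, nsmul_eq_mul]
    have hTlow : (H.card : ℝ)⁻¹ * Real.exp (-(β * ψ G)) ≤ T := by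
      obtain ⟨x0, hx0, hx0eq⟩ := F.exists_mem_eq_inf' hF Mx
      have hψx0 : ψ G = Mx x0 := hψG.trans hx0eq
      have h1 : (S x0)⁻¹ ≤ T :=
        Finset.single_le_sum (f := fun x => (S x)⁻¹)
          (fun x _ => (inv_pos.2 (hSpos x)).le) hx0
      have h2 : ((H.card : ℝ) * Real.exp (β * Mx x0))⁻¹ ≤ (S x0)⁻¹ :=
        inv_anti₀ (hSpos x0) (hup x0)
      refine le_trans (le_of_eq ?_) (h2.trans h1)
      rw [mul_inv, ← Real.exp_neg, hψx0]
    have hHcard : (0:ℝ) < (H.card : ℝ) := by exact_mod_cast hH.card_pos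
    have hFcard : (0:ℝ) < (F.card : ℝ) := by exact_mod_cast hF.card_pos
    have hlog1 : Real.log T ≤ Real.log F.card - β * ψ G := by
      have := Real.log_le_log hTpos hTup
      rwa [Real.log_mul hFcard.ne' (Real.exp_pos _).ne', Real.log_exp,
        ← sub_eq_add_neg] at this
    have hlog2 : -Real.log H.card - β * ψ G ≤ Real.log T := by
      have := Real.log_le_log (by positivity) hTlow
      rwa [Real.log_mul (by positivity) (Real.exp_pos _).ne', Real.log_inv,
        Real.log_exp, ← sub_eq_add_neg] at this
    rw [hφG, abs_le]
    constructor
    · rw [show -(C / β) = (-C) / β by ring, div_le_iff₀ hβ]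
      have hinv : 1 / β * Real.log T * β = Real.log T := by field_simp
      nlinarith
    · rw [le_div_iff₀ hβ]
      have hinv : 1 / β * Real.log T * β = Real.log T := by field_simp
      nlinarith
  -- integrability of φ β
  have hφmeas : ∀ β : ℝ, Measurable (φ β) := by
    intro β
    apply Measurable.const_mul
    apply Real.measurable_log.comp
    exact Finset.measurable_sum _ fun x _ =>
      (Finset.measurable_sum _ fun y _ =>
        (((hgmeas x y).const_mul β).exp)).inv
  have hdiff : ∀ β : ℝ, 0 < β → Integrable (fun G => φ β G + ψ G) μ := by
    intro β hβ
    refine (integrable_const (C / β)).mono'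
      ((hφmeas β).add hψmeas).aestronglyMeasurable
      (Filter.Eventually.of_forall fun G => ?_)
    simpa [Real.norm_eq_abs] using key β hβ G
  have hφint : ∀ β : ℝ, 0 < β → Integrable (φ β) μ := by
    intro β hβ
    have := (hdiff β hβ).sub hψint
    refine this.congr (Filter.Eventually.of_forall fun G => ?_)
    show (φ β G + ψ G) - ψ G = φ β G
    ring
  refine ⟨hφint, hψint, ?_⟩
  -- the limit
  have hC0 : 0 ≤ C := le_trans (Real.log_nonneg (by exact_mod_cast hF.card_pos)) hCF
  have hbound : ∀ᶠ β : ℝ in Filter.atTop, ‖(∫ G, φ β G ∂μ) + ∫ G, ψ G ∂μ‖ ≤ C / β := by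
    filter_upwards [Filter.eventually_gt_atTop 0] with β hβ
    rw [← integral_add (hφint β hβ) hψint, Real.norm_eq_abs]
    calc |∫ G, (φ β G + ψ G) ∂μ| ≤ ∫ G, |φ β G + ψ G| ∂μ := by
          simpa [Real.norm_eq_abs] using
            norm_integral_le_integral_norm (μ := μ) (fun G => φ β G + ψ G)
      _ ≤ ∫ _G, C / β ∂μ := integral_mono ((hdiff β hβ).abs) (integrable_const _)
            (fun G => key β hβ G)
      _ = C / β := by simp
  have hCto : Filter.Tendsto (fun β : ℝ => C / β) Filter.atTop (nhds 0) := by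
    simpa [div_eq_mul_inv] using tendsto_inv_atTop_zero.const_mul C
  have h0 : Filter.Tendsto (fun β : ℝ => (∫ G, φ β G ∂μ) + ∫ G, ψ G ∂μ)
      Filter.atTop (nhds 0) := squeeze_zero_norm' hbound hCto
  have := h0.sub_const (∫ G, ψ G ∂μ)
  simpa using this
end
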